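/- For a real parameter γ let σ_γ denote the 2×2 complex matrix with zero diagonal, top-right entry e^{iγ} and bottom-left entry e^{−iγ}. For α, β ∈ ℝ define the 4×4 complex matrix S(α,β) = σ_0 ⊗ (σ_0 + σ_β) + σ_α ⊗ (σ_0 − σ_β) (Kronecker product), and set μ = 1 + e^{iβ} + (1 − e^{iβ})e^{iα} and ν = 1 + e^{−iβ} + (1 − e^{−iβ})e^{iα}. Then: (i) |μ|² = 4(1 + sin α sin β) and |ν|² = 4(1 − sin α sin β); and (ii) if μ ≠ 0 and ν ≠ 0, then, writing e₁, e₂, e₃, e₄ for the standard basis of ℂ⁴, the four vectors φ_{0,0} = (1/√2)((μ/|μ|)e₁ + e₄), φ_{0,1} = (1/√2)(−(μ/|μ|)e₁ + e₄), φ_{1,0} = (1/√2)((ν/|ν|)e₂ + e₃), φ_{1,1} = (1/√2)(−(ν/|ν|)e₂ + e₃) form an orthonormal basis of ℂ⁴ and satisfy S(α,β)φ_{0,0} = |μ|·φ_{0,0}, S(α,β)φ_{0,1} = −|μ|·φ_{0,1}, S(α,β)φ_{1,0} = |ν|·φ_{1,0}, and S(α,β)φ_{1,1} = −|ν|·φ_{1,1}.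 -/

import Mathlib

open Matrix Kronecker

private lemma aux_abs_sq (α β : ℝ) (μ : ℂ) (hμ : μ = 1 + Complex.exp (Complex.I * β) +
      (1 - Complex.exp (Complex.I * β)) * Complex.exp (Complex.I * α)) :
    ‖μ‖ ^ 2 = 4 * (1 + Real.sin α * Real.sin β) := by
  rw [hμ, show Complex.I * (β:ℂ) = (β:ℂ) * Complex.I by ring,
    show Complex.I * (α:ℂ) = (α:ℂ) * Complex.I by ring, Complex.exp_mul_I, Complex.exp_mul_I]
  simp only [← Complex.ofReal_cos, ← Complex.ofReal_sin, Complex.sq_norm, Complex.normSq_apply]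
  simp [Complex.add_re, Complex.add_im, Complex.mul_re, Complex.mul_im, Complex.cos_ofReal_re,
    Complex.sin_ofReal_re, Complex.cos_ofReal_im, Complex.sin_ofReal_im]
  linear_combination (1 - 2*Real.cos β + Real.sin β^2 + Real.cos β^2) * Real.sin_sq_add_cos_sq α
    + (2 - 2*Real.cos α) * Real.sin_sq_add_cos_sq β


set_option maxHeartbeats 2000000 in
/-- Spectral analysis of the CHSH operator
`S(α,β) = σ₀ ⊗ (σ₀ + σ_β) + σ_α ⊗ (σ₀ - σ_β)`:
(i) `|μ|² = 4(1 + sin α sin β)` and `|ν|² = 4(1 - sin α sin β)`;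
(ii) if `μ ≠ 0` and `ν ≠ 0`, the vectors `φ_{t,s}` form an orthonormal basis of ℂ⁴ and
are eigenvectors of `S(α,β)` with eigenvalues `±|μ|, ±|ν|`. -/
theorem stmt_10 (α β : ℝ)
    (σ : ℝ → Matrix (Fin 2) (Fin 2) ℂ)
    (hσ : ∀ γ : ℝ, σ γ =
      !![0, Complex.exp (Complex.I * γ); Complex.exp (-(Complex.I * γ)), 0])
    (S : Matrix (Fin 2 × Fin 2) (Fin 2 × Fin 2) ℂ)
    (hS : S = σ 0 ⊗ₖ (σ 0 + σ β) + σ α ⊗ₖ (σ 0 - σ β))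
    (μ ν : ℂ)
    (hμ : μ = 1 + Complex.exp (Complex.I * β) +
      (1 - Complex.exp (Complex.I * β)) * Complex.exp (Complex.I * α))
    (hν : ν = 1 + Complex.exp (-(Complex.I * β)) +
      (1 - Complex.exp (-(Complex.I * β))) * Complex.exp (Complex.I * α))
    (φ : Bool → Bool → (Fin 2 × Fin 2) → ℂ)
    (hφ00 : φ false false = (1 / (Real.sqrt 2 : ℂ)) •
      ((μ / (‖μ‖ : ℂ)) • (Pi.single ((0 : Fin 2), (0 : Fin 2)) 1 : (Fin 2 × Fin 2) → ℂ) +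
        (Pi.single ((1 : Fin 2), (1 : Fin 2)) 1 : (Fin 2 × Fin 2) → ℂ)))
    (hφ01 : φ false true = (1 / (Real.sqrt 2 : ℂ)) •
      (-((μ / (‖μ‖ : ℂ)) • (Pi.single ((0 : Fin 2), (0 : Fin 2)) 1 : (Fin 2 × Fin 2) → ℂ)) +
        (Pi.single ((1 : Fin 2), (1 : Fin 2)) 1 : (Fin 2 × Fin 2) → ℂ)))
    (hφ10 : φ true false = (1 / (Real.sqrt 2 : ℂ)) •
      ((ν / (‖ν‖ : ℂ)) • (Pi.single ((0 : Fin 2), (1 : Fin 2)) 1 : (Fin 2 × Fin 2) → ℂ) +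
        (Pi.single ((1 : Fin 2), (0 : Fin 2)) 1 : (Fin 2 × Fin 2) → ℂ)))
    (hφ11 : φ true true = (1 / (Real.sqrt 2 : ℂ)) •
      (-((ν / (‖ν‖ : ℂ)) • (Pi.single ((0 : Fin 2), (1 : Fin 2)) 1 : (Fin 2 × Fin 2) → ℂ)) +
        (Pi.single ((1 : Fin 2), (0 : Fin 2)) 1 : (Fin 2 × Fin 2) → ℂ))) :
    (‖μ‖ ^ 2 = 4 * (1 + Real.sin α * Real.sin β) ∧
     ‖ν‖ ^ 2 = 4 * (1 - Real.sin α * Real.sin β)) ∧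
    (μ ≠ 0 → ν ≠ 0 →
      (∀ t s t' s' : Bool,
        ∑ i : Fin 2 × Fin 2, (starRingEnd ℂ) (φ t s i) * φ t' s' i =
          if t = t' ∧ s = s' then 1 else 0) ∧
      S.mulVec (φ false false) = (‖μ‖ : ℂ) • φ false false ∧
      S.mulVec (φ false true) = (-(‖μ‖ : ℂ)) • φ false true ∧
      S.mulVec (φ true false) = (‖ν‖ : ℂ) • φ true false ∧
      S.mulVec (φ true true) = (-(‖ν‖ : ℂ)) • φ true true) := by
  have hmu2 : ‖μ‖ ^ 2 = 4 * (1 + Real.sin α * Real.sin β) :=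
    aux_abs_sq α β μ hμ
  have hnu2 : ‖ν‖ ^ 2 = 4 * (1 - Real.sin α * Real.sin β) := by
    have h := aux_abs_sq α (-β) ν (by rw [hν]; push_cast; ring_nf)
    rw [Real.sin_neg] at h
    linarith [h]
  refine ⟨⟨hmu2, hnu2⟩, ?_⟩
  intro hm hn
  have habsμ : (‖μ‖ : ℂ) ≠ 0 := by
    simpa using (norm_ne_zero_iff).2 hm
  have habsν : (‖ν‖ : ℂ) ≠ 0 := by
    simpa using (norm_ne_zero_iff).2 hn
  have h2 : ((Real.sqrt 2 : ℝ) : ℂ) ≠ 0 := by norm_cast; positivity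
  have h22 : ((Real.sqrt 2 : ℝ) : ℂ) * ((Real.sqrt 2 : ℝ) : ℂ) = 2 := by
    norm_cast; exact Real.mul_self_sqrt (by norm_num)
  have hc : ((Real.sqrt 2 : ℝ) : ℂ)⁻¹ * ((Real.sqrt 2 : ℝ) : ℂ)⁻¹ = (2 : ℂ)⁻¹ := by
    rw [← mul_inv, h22]
  have hsqμ : (starRingEnd ℂ) μ * μ = (‖μ‖ : ℂ) * (‖μ‖ : ℂ) := by
    rw [mul_comm, Complex.mul_conj, Complex.normSq_eq_norm_sq]; push_cast; ring
  have hsqν : (starRingEnd ℂ) ν * ν = (‖ν‖ : ℂ) * (‖ν‖ : ℂ) := by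
    rw [mul_comm, Complex.mul_conj, Complex.normSq_eq_norm_sq]; push_cast; ring
  have hcm : (starRingEnd ℂ) μ = 1 + Complex.exp (-(Complex.I * β)) +
      (1 - Complex.exp (-(Complex.I * β))) * Complex.exp (-(Complex.I * α)) := by
    rw [hμ]
    simp [map_add, _root_.map_mul, map_sub, ← Complex.exp_conj, Complex.conj_I,
      Complex.conj_ofReal]
  have hcn : (starRingEnd ℂ) ν = 1 + Complex.exp (Complex.I * β) +
      (1 - Complex.exp (Complex.I * β)) * Complex.exp (-(Complex.I * α)) := by
    rw [hν]
    simp [map_add, _root_.map_mul, map_sub, ← Complex.exp_conj, Complex.conj_I,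
      Complex.conj_ofReal]
  obtain ⟨u, hu_def⟩ : ∃ u : ℂ, u = μ / (‖μ‖ : ℂ) := ⟨_, rfl⟩
  obtain ⟨v, hv_def⟩ : ∃ v : ℂ, v = ν / (‖ν‖ : ℂ) := ⟨_, rfl⟩
  rw [← hu_def] at hφ00 hφ01
  rw [← hv_def] at hφ10 hφ11
  have hu : (starRingEnd ℂ) u * u = 1 := by
    have h1 : ‖u‖ = 1 := by
      simp [hu_def, map_div₀, Complex.norm_real, abs_of_nonneg (norm_nonneg μ),
        div_self (norm_ne_zero_iff.mpr hm)]
    rw [mul_comm, Complex.mul_conj, Complex.normSq_eq_norm_sq, h1]; norm_num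
  have hv : (starRingEnd ℂ) v * v = 1 := by
    have h1 : ‖v‖ = 1 := by
      simp [hv_def, map_div₀, Complex.norm_real, abs_of_nonneg (norm_nonneg ν),
        div_self (norm_ne_zero_iff.mpr hn)]
    rw [mul_comm, Complex.mul_conj, Complex.normSq_eq_norm_sq, h1]; norm_num
  have hμ' : (‖μ‖ : ℂ) * u = μ := by rw [hu_def]; field_simp
  have hν' : (‖ν‖ : ℂ) * v = ν := by rw [hv_def]; field_simp
  have e3μ : (starRingEnd ℂ) μ * u = (‖μ‖ : ℂ) := by
    rw [hu_def, mul_div_assoc']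
    rw [hsqμ]
    field_simp
  have e3ν : (starRingEnd ℂ) ν * v = (‖ν‖ : ℂ) := by
    rw [hv_def, mul_div_assoc']
    rw [hsqν]
    field_simp
  refine ⟨?_, ?_, ?_, ?_, ?_⟩
  · intro t s t' s'
    cases t <;> cases s <;> cases t' <;> cases s' <;>
      simp only [hφ00, hφ01, hφ10, hφ11] <;>
      simp [Fintype.sum_prod_type, Fin.sum_univ_two, Pi.single_apply, Prod.ext_iff,
        Complex.conj_ofReal] <;>
      first
        | linear_combination ((Real.sqrt 2 : ℝ) : ℂ)⁻¹ * ((Real.sqrt 2 : ℝ) : ℂ)⁻¹ * hu + 2 * hc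
        | linear_combination ((Real.sqrt 2 : ℝ) : ℂ)⁻¹ * ((Real.sqrt 2 : ℝ) : ℂ)⁻¹ * hv + 2 * hc
        | linear_combination (((Real.sqrt 2 : ℝ) : ℂ)⁻¹ * ((Real.sqrt 2 : ℝ) : ℂ)⁻¹) * hu
        | linear_combination (((Real.sqrt 2 : ℝ) : ℂ)⁻¹ * ((Real.sqrt 2 : ℝ) : ℂ)⁻¹) * hv
        | linear_combination (-(((Real.sqrt 2 : ℝ) : ℂ)⁻¹ * ((Real.sqrt 2 : ℝ) : ℂ)⁻¹)) * hu
        | linear_combination (-(((Real.sqrt 2 : ℝ) : ℂ)⁻¹ * ((Real.sqrt 2 : ℝ) : ℂ)⁻¹)) * hv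
  all_goals (
    funext x
    obtain ⟨i, j⟩ := x
    fin_cases i <;> fin_cases j <;>
      simp only [hS, hσ, hφ00, hφ01, hφ10, hφ11] <;>
      simp [Matrix.mulVec, dotProduct, Fintype.sum_prod_type, Fin.sum_univ_two,
        Pi.single_apply, Prod.ext_iff, Matrix.kroneckerMap_apply,
        Matrix.add_apply, Matrix.sub_apply] <;>
      first
        | linear_combination (-((Real.sqrt 2 : ℝ) : ℂ)⁻¹) * hμ' + (-((Real.sqrt 2 : ℝ) : ℂ)⁻¹) * hμ
        | linear_combination (((Real.sqrt 2 : ℝ) : ℂ)⁻¹) * hμ' + (((Real.sqrt 2 : ℝ) : ℂ)⁻¹) * hμ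
        | linear_combination (-((Real.sqrt 2 : ℝ) : ℂ)⁻¹) * hν' + (-((Real.sqrt 2 : ℝ) : ℂ)⁻¹) * hν
        | linear_combination (((Real.sqrt 2 : ℝ) : ℂ)⁻¹) * hν' + (((Real.sqrt 2 : ℝ) : ℂ)⁻¹) * hν
        | linear_combination (-(((Real.sqrt 2 : ℝ) : ℂ)⁻¹ * u)) * hcm + ((Real.sqrt 2 : ℝ) : ℂ)⁻¹ * e3μ
        | linear_combination (((Real.sqrt 2 : ℝ) : ℂ)⁻¹ * u) * hcm + (-((Real.sqrt 2 : ℝ) : ℂ)⁻¹) * e3μ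
        | linear_combination (-(((Real.sqrt 2 : ℝ) : ℂ)⁻¹ * v)) * hcn + ((Real.sqrt 2 : ℝ) : ℂ)⁻¹ * e3ν
        | linear_combination (((Real.sqrt 2 : ℝ) : ℂ)⁻¹ * v) * hcn + (-((Real.sqrt 2 : ℝ) : ℂ)⁻¹) * e3ν)
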